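/- Let f : ℝ × ℝ² → ℝ, u : ℝ × ℝ³ → ℝ³, and F : ℝ × ℝ³ → ℝ^{3×3} be smooth. Assume: (i) the kinematic boundary condition u̲·N_f = ∂_t f holds on ℝ × ℝ²; and (ii) the deformation equation ∂_t F_{ij} + Σ_{m=1}^{3} u_m ∂_m F_{ij} = Σ_{m=1}^{3} F_{mj} ∂_m u_i holds at every point (t, x', f(t,x')) of the graph, for all i, j. Then for all i, j ∈ {1,2,3} and all (t,x'): D_t(F̲_{ij}) = Σ_{s=1}^{2} F̲_{sj} ∂_s(u̲_i) + (F̲_j · N_f) · (∂₃ u_i)̲. -/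

import Mathlib

open scoped BigOperators

noncomputable section

/-! Partial derivatives of curried functions of several real variables. -/

/-- derivative in the 1st of 2 arguments -/
def d1_2 (g : ℝ → ℝ → ℝ) : ℝ → ℝ → ℝ := fun a b => deriv (fun s => g s b) a
/-- derivative in the 2nd of 2 arguments -/
def d2_2 (g : ℝ → ℝ → ℝ) : ℝ → ℝ → ℝ := fun a b => deriv (fun s => g a s) b

/-- derivative in the 1st of 3 arguments -/
def d1_3 (g : ℝ → ℝ → ℝ → ℝ) : ℝ → ℝ → ℝ → ℝ := fun a b c => deriv (fun s => g s b c) a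
/-- derivative in the 2nd of 3 arguments -/
def d2_3 (g : ℝ → ℝ → ℝ → ℝ) : ℝ → ℝ → ℝ → ℝ := fun a b c => deriv (fun s => g a s c) b
/-- derivative in the 3rd of 3 arguments -/
def d3_3 (g : ℝ → ℝ → ℝ → ℝ) : ℝ → ℝ → ℝ → ℝ := fun a b c => deriv (fun s => g a b s) c

/-- derivative in the 1st of 4 arguments -/
def d1_4 (g : ℝ → ℝ → ℝ → ℝ → ℝ) : ℝ → ℝ → ℝ → ℝ → ℝ := fun a b c e => deriv (fun s => g s b c e) a
/-- derivative in the 2nd of 4 arguments -/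
def d2_4 (g : ℝ → ℝ → ℝ → ℝ → ℝ) : ℝ → ℝ → ℝ → ℝ → ℝ := fun a b c e => deriv (fun s => g a s c e) b
/-- derivative in the 3rd of 4 arguments -/
def d3_4 (g : ℝ → ℝ → ℝ → ℝ → ℝ) : ℝ → ℝ → ℝ → ℝ → ℝ := fun a b c e => deriv (fun s => g a b s e) c
/-- derivative in the 4th of 4 arguments -/
def d4_4 (g : ℝ → ℝ → ℝ → ℝ → ℝ) : ℝ → ℝ → ℝ → ℝ → ℝ := fun a b c e => deriv (fun s => g a b c s) e

/-- spatial derivatives ∂₁, ∂₂, ∂₃ of v(t, x₁, x₂, x₃) -/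
def dsp : Fin 3 → (ℝ → ℝ → ℝ → ℝ → ℝ) → (ℝ → ℝ → ℝ → ℝ → ℝ) := ![d2_4, d3_4, d4_4]
/-- tangential derivatives ∂₁, ∂₂ of g(t, x₁, x₂) -/
def dtg : Fin 2 → (ℝ → ℝ → ℝ → ℝ) → (ℝ → ℝ → ℝ → ℝ) := ![d2_3, d3_3]
/-- spatial derivatives ∂₁, ∂₂, ∂₃ of v(x₁, x₂, x₃) -/
def dsp3 : Fin 3 → (ℝ → ℝ → ℝ → ℝ) → (ℝ → ℝ → ℝ → ℝ) := ![d1_3, d2_3, d3_3]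
/-- derivatives ∂₁, ∂₂ of g(x₁, x₂) -/
def dtg2 : Fin 2 → (ℝ → ℝ → ℝ) → (ℝ → ℝ → ℝ) := ![d1_2, d2_2]

/-- C^∞ smoothness for a function of 2 real variables -/
def smooth2 (g : ℝ → ℝ → ℝ) : Prop :=
  ContDiff ℝ (⊤ : ℕ∞) (fun p : ℝ × ℝ => g p.1 p.2)
/-- C^∞ smoothness for a function of 3 real variables -/
def smooth3 (g : ℝ → ℝ → ℝ → ℝ) : Prop :=
  ContDiff ℝ (⊤ : ℕ∞) (fun p : ℝ × ℝ × ℝ => g p.1 p.2.1 p.2.2)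
/-- C^∞ smoothness for a function of 4 real variables -/
def smooth4 (g : ℝ → ℝ → ℝ → ℝ → ℝ) : Prop :=
  ContDiff ℝ (⊤ : ℕ∞) (fun p : ℝ × ℝ × ℝ × ℝ => g p.1 p.2.1 p.2.2.1 p.2.2.2)

/-- trace of v(t,x₁,x₂,x₃) on the graph x₃ = f(t,x₁,x₂) -/
def tr (v : ℝ → ℝ → ℝ → ℝ → ℝ) (f : ℝ → ℝ → ℝ → ℝ) : ℝ → ℝ → ℝ → ℝ :=
  fun t x y => v t x y (f t x y)
/-- trace of v(x₁,x₂,x₃) on the graph x₃ = f(x₁,x₂) -/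
def tr2 (v : ℝ → ℝ → ℝ → ℝ) (f : ℝ → ℝ → ℝ) : ℝ → ℝ → ℝ :=
  fun x y => v x y (f x y)

/-- the (non-normalized) outward normal N_f = (−∂₁f, −∂₂f, 1) of the graph of f(t,·) -/
def Nf (f : ℝ → ℝ → ℝ → ℝ) : Fin 3 → ℝ → ℝ → ℝ → ℝ :=
  ![fun t x y => -(d2_3 f t x y), fun t x y => -(d3_3 f t x y), fun _ _ _ => 1]
/-- the (non-normalized) outward normal of the graph of a time-independent f -/
def Nf2 (f : ℝ → ℝ → ℝ) : Fin 3 → ℝ → ℝ → ℝ :=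
  ![fun x y => -(d1_2 f x y), fun x y => -(d2_2 f x y), fun _ _ => 1]

/-- the interface material derivative D_t g = ∂_t g + u̲₁ ∂₁ g + u̲₂ ∂₂ g -/
def Dt (u : Fin 3 → ℝ → ℝ → ℝ → ℝ → ℝ) (f : ℝ → ℝ → ℝ → ℝ)
    (g : ℝ → ℝ → ℝ → ℝ) : ℝ → ℝ → ℝ → ℝ :=
  fun t x y => d1_3 g t x y + tr (u 0) f t x y * d2_3 g t x y + tr (u 1) f t x y * d3_3 g t x y

/-- the material derivative D_t g = ∂_t g + u₁ ∂₁ g + u₂ ∂₂ g for given coefficients u₁,u₂ on ℝ×ℝ² -/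
def Dt2 (u : Fin 2 → ℝ → ℝ → ℝ → ℝ) (g : ℝ → ℝ → ℝ → ℝ) : ℝ → ℝ → ℝ → ℝ :=
  fun t x y => d1_3 g t x y + u 0 t x y * d2_3 g t x y + u 1 t x y * d3_3 g t x y

/-- the tangential deformation derivative D_{F_k} g = F̲₁ₖ ∂₁ g + F̲₂ₖ ∂₂ g -/
def DF (F : Fin 3 → Fin 3 → ℝ → ℝ → ℝ → ℝ → ℝ) (f : ℝ → ℝ → ℝ → ℝ) (k : Fin 3)
    (g : ℝ → ℝ → ℝ → ℝ) : ℝ → ℝ → ℝ → ℝ :=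
  fun t x y => tr (F 0 k) f t x y * d2_3 g t x y + tr (F 1 k) f t x y * d3_3 g t x y

/-- the full material derivative D_t g = ∂_t g + Σ u_m ∂_m g on ℝ×ℝ³ -/
def Dt4 (u : Fin 3 → ℝ → ℝ → ℝ → ℝ → ℝ) (g : ℝ → ℝ → ℝ → ℝ → ℝ) : ℝ → ℝ → ℝ → ℝ → ℝ :=
  fun t x y z => d1_4 g t x y z + ∑ m : Fin 3, u m t x y z * dsp m g t x y z

/-- the spatial Laplacian on ℝ×ℝ³ -/
def lap4 (g : ℝ → ℝ → ℝ → ℝ → ℝ) : ℝ → ℝ → ℝ → ℝ → ℝ :=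
  fun t x y z => ∑ k : Fin 3, dsp k (dsp k g) t x y z

private lemma hasDerivAt_comp4 (v : ℝ → ℝ → ℝ → ℝ → ℝ) (hv : smooth4 v)
    (c₁ c₂ c₃ c₄ : ℝ → ℝ) (d₁ d₂ d₃ d₄ : ℝ) (s : ℝ)
    (h₁ : HasDerivAt c₁ d₁ s) (h₂ : HasDerivAt c₂ d₂ s)
    (h₃ : HasDerivAt c₃ d₃ s) (h₄ : HasDerivAt c₄ d₄ s) :
    HasDerivAt (fun r => v (c₁ r) (c₂ r) (c₃ r) (c₄ r))
      (fderiv ℝ (fun p : ℝ × ℝ × ℝ × ℝ => v p.1 p.2.1 p.2.2.1 p.2.2.2)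
        (c₁ s, c₂ s, c₃ s, c₄ s) (d₁, d₂, d₃, d₄)) s := by
  have hc : HasDerivAt (fun r => ((c₁ r, c₂ r, c₃ r, c₄ r) : ℝ × ℝ × ℝ × ℝ))
      ((d₁, d₂, d₃, d₄) : ℝ × ℝ × ℝ × ℝ) s := h₁.prodMk (h₂.prodMk (h₃.prodMk h₄))
  have hV := ((hv.differentiable (by simp)) (c₁ s, c₂ s, c₃ s, c₄ s)).hasFDerivAt
  exact hV.comp_hasDerivAt s hc

private lemma d1_4_eq (v : ℝ → ℝ → ℝ → ℝ → ℝ) (hv : smooth4 v) (a b c e : ℝ) :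
    d1_4 v a b c e = fderiv ℝ (fun p : ℝ × ℝ × ℝ × ℝ => v p.1 p.2.1 p.2.2.1 p.2.2.2)
      (a, b, c, e) (1, 0, 0, 0) :=
  (hasDerivAt_comp4 v hv _ _ _ _ _ _ _ _ a (hasDerivAt_id a) (hasDerivAt_const a b)
    (hasDerivAt_const a c) (hasDerivAt_const a e)).deriv

private lemma d2_4_eq (v : ℝ → ℝ → ℝ → ℝ → ℝ) (hv : smooth4 v) (a b c e : ℝ) :
    d2_4 v a b c e = fderiv ℝ (fun p : ℝ × ℝ × ℝ × ℝ => v p.1 p.2.1 p.2.2.1 p.2.2.2)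
      (a, b, c, e) (0, 1, 0, 0) :=
  (hasDerivAt_comp4 v hv _ _ _ _ _ _ _ _ b (hasDerivAt_const b a) (hasDerivAt_id b)
    (hasDerivAt_const b c) (hasDerivAt_const b e)).deriv

private lemma d3_4_eq (v : ℝ → ℝ → ℝ → ℝ → ℝ) (hv : smooth4 v) (a b c e : ℝ) :
    d3_4 v a b c e = fderiv ℝ (fun p : ℝ × ℝ × ℝ × ℝ => v p.1 p.2.1 p.2.2.1 p.2.2.2)
      (a, b, c, e) (0, 0, 1, 0) :=
  (hasDerivAt_comp4 v hv _ _ _ _ _ _ _ _ c (hasDerivAt_const c a) (hasDerivAt_const c b)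
    (hasDerivAt_id c) (hasDerivAt_const c e)).deriv

private lemma d4_4_eq (v : ℝ → ℝ → ℝ → ℝ → ℝ) (hv : smooth4 v) (a b c e : ℝ) :
    d4_4 v a b c e = fderiv ℝ (fun p : ℝ × ℝ × ℝ × ℝ => v p.1 p.2.1 p.2.2.1 p.2.2.2)
      (a, b, c, e) (0, 0, 0, 1) :=
  (hasDerivAt_comp4 v hv _ _ _ _ _ _ _ _ e (hasDerivAt_const e a) (hasDerivAt_const e b)
    (hasDerivAt_const e c) (hasDerivAt_id e)).deriv

private lemma f_hasDerivAt1 (f : ℝ → ℝ → ℝ → ℝ) (hf : smooth3 f) (t x y : ℝ) :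
    HasDerivAt (fun s => f s x y) (d1_3 f t x y) t := by
  have : Differentiable ℝ (fun s => f s x y) :=
    (hf.differentiable (by simp)).comp
      (differentiable_id.prodMk ((differentiable_const x).prodMk (differentiable_const y)))
  exact (this t).hasDerivAt

private lemma f_hasDerivAt2 (f : ℝ → ℝ → ℝ → ℝ) (hf : smooth3 f) (t x y : ℝ) :
    HasDerivAt (fun s => f t s y) (d2_3 f t x y) x := by
  have : Differentiable ℝ (fun s => f t s y) :=
    (hf.differentiable (by simp)).comp
      ((differentiable_const t).prodMk (differentiable_id.prodMk (differentiable_const y)))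
  exact (this x).hasDerivAt

private lemma f_hasDerivAt3 (f : ℝ → ℝ → ℝ → ℝ) (hf : smooth3 f) (t x y : ℝ) :
    HasDerivAt (fun s => f t x s) (d3_3 f t x y) y := by
  have : Differentiable ℝ (fun s => f t x s) :=
    (hf.differentiable (by simp)).comp
      ((differentiable_const t).prodMk ((differentiable_const x).prodMk differentiable_id))
  exact (this y).hasDerivAt

private lemma split_dir (L : ℝ × ℝ × ℝ × ℝ →L[ℝ] ℝ) (a b c r : ℝ) :
    L (a, b, c, r) = L (a, b, c, 0) + r * L (0, 0, 0, 1) := by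
  have : ((a, b, c, r) : ℝ × ℝ × ℝ × ℝ) = (a, b, c, 0) + r • (0, 0, 0, 1) := by
    simp [Prod.ext_iff]
  rw [this, map_add, map_smul]
  simp [smul_eq_mul]

private lemma trace_deriv1 (v : ℝ → ℝ → ℝ → ℝ → ℝ) (f : ℝ → ℝ → ℝ → ℝ)
    (hv : smooth4 v) (hf : smooth3 f) (t x y : ℝ) :
    d1_3 (tr v f) t x y = tr (d1_4 v) f t x y + tr (d4_4 v) f t x y * d1_3 f t x y := by
  have h := (hasDerivAt_comp4 v hv id (fun _ => x) (fun _ => y) (fun s => f s x y)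
    1 0 0 (d1_3 f t x y) t (hasDerivAt_id t) (hasDerivAt_const t x) (hasDerivAt_const t y)
    (f_hasDerivAt1 f hf t x y)).deriv
  simp only [id_eq] at h
  show deriv (fun s => v s x y (f s x y)) t = _
  rw [h, split_dir, ← d1_4_eq v hv, ← d4_4_eq v hv]
  simp only [tr]
  ring

private lemma trace_deriv2 (v : ℝ → ℝ → ℝ → ℝ → ℝ) (f : ℝ → ℝ → ℝ → ℝ)
    (hv : smooth4 v) (hf : smooth3 f) (t x y : ℝ) :
    d2_3 (tr v f) t x y = tr (d2_4 v) f t x y + tr (d4_4 v) f t x y * d2_3 f t x y := by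
  have h := (hasDerivAt_comp4 v hv (fun _ => t) id (fun _ => y) (fun s => f t s y)
    0 1 0 (d2_3 f t x y) x (hasDerivAt_const x t) (hasDerivAt_id x) (hasDerivAt_const x y)
    (f_hasDerivAt2 f hf t x y)).deriv
  simp only [id_eq] at h
  show deriv (fun s => v t s y (f t s y)) x = _
  rw [h, split_dir, ← d2_4_eq v hv, ← d4_4_eq v hv]
  simp only [tr]
  ring

private lemma trace_deriv3 (v : ℝ → ℝ → ℝ → ℝ → ℝ) (f : ℝ → ℝ → ℝ → ℝ)
    (hv : smooth4 v) (hf : smooth3 f) (t x y : ℝ) :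
    d3_3 (tr v f) t x y = tr (d3_4 v) f t x y + tr (d4_4 v) f t x y * d3_3 f t x y := by
  have h := (hasDerivAt_comp4 v hv (fun _ => t) (fun _ => x) id (fun s => f t x s)
    0 0 1 (d3_3 f t x y) y (hasDerivAt_const y t) (hasDerivAt_const y x) (hasDerivAt_id y)
    (f_hasDerivAt3 f hf t x y)).deriv
  simp only [id_eq] at h
  show deriv (fun s => v t x s (f t x s)) y = _
  rw [h, split_dir, ← d3_4_eq v hv, ← d4_4_eq v hv]
  simp only [tr]
  ring

/-- trace identity for the deformation equation on the free interface. -/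
theorem trace_deformation_equation
    (f : ℝ → ℝ → ℝ → ℝ) (u : Fin 3 → ℝ → ℝ → ℝ → ℝ → ℝ)
    (F : Fin 3 → Fin 3 → ℝ → ℝ → ℝ → ℝ → ℝ)
    (hf : smooth3 f) (hu : ∀ i, smooth4 (u i)) (hF : ∀ i j, smooth4 (F i j))
    (hkbc : ∀ t x y, (∑ k : Fin 3, tr (u k) f t x y * Nf f k t x y) = d1_3 f t x y)
    (hdef : ∀ i j : Fin 3, ∀ t x y,
      tr (d1_4 (F i j)) f t x y
        + ∑ m : Fin 3, tr (u m) f t x y * tr (dsp m (F i j)) f t x y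
        = ∑ m : Fin 3, tr (F m j) f t x y * tr (dsp m (u i)) f t x y) :
    ∀ i j : Fin 3, ∀ t x y,
      Dt u f (tr (F i j) f) t x y
        = (∑ s : Fin 2, tr (F s.castSucc j) f t x y * dtg s (tr (u i) f) t x y)
          + (∑ m : Fin 3, tr (F m j) f t x y * Nf f m t x y) * tr (dsp 2 (u i)) f t x y := by
  intro i j t x y
  have hd := hdef i j t x y
  have hk := hkbc t x y
  simp only [Fin.sum_univ_three, Fin.sum_univ_two, dsp, dtg, Nf, Matrix.cons_val_zero,
    Matrix.cons_val_one, Matrix.head_cons, Matrix.cons_val_two, Matrix.tail_cons] at hd hk ⊢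
  unfold Dt
  rw [trace_deriv1 (F i j) f (hF i j) hf, trace_deriv2 (F i j) f (hF i j) hf,
    trace_deriv3 (F i j) f (hF i j) hf, trace_deriv2 (u i) f (hu i) hf,
    trace_deriv3 (u i) f (hu i) hf]
  have hc : (Fin.castSucc 0 : Fin 3) = 0 := rfl
  have hc1 : (Fin.castSucc 1 : Fin 3) = 1 := rfl
  rw [hc, hc1]
  linear_combination hd - tr (d4_4 (F i j)) f t x y * hk
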